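/- Fix n ≥ 2 and w_1,…,w_n ≥ 2. A normalized, no-signalling behavior P in the scenario [(2 2),(w_1…w_n)] is local if and only if P is nonnegative and satisfies all lifted CHSH inequalities. -/

import Mathlib

/-!
Bell scenario [(2 2),(w_1…w_n)]: party A has two measurements `x : Fin 2`, each with
outcomes `a : Fin 2` (the paper's labels "1","2" are the indices `0`,`1`), and party B
has `n` measurements `y : Fin n`, measurement `y` having outcomes `b : Fin (w y)`
(the paper's label `j ∈ {1,…,w_y}` is the index `j-1`).  A behavior is
`P : Fin 2 → (y : Fin n) → Fin 2 → Fin (w y) → ℝ`, with `P x y a b = P(ab|xy)`.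
-/

/-- The behavior `P` is nonnegative. -/
def Nonneg22 {n : ℕ} {w : Fin n → ℕ}
    (P : Fin 2 → (y : Fin n) → Fin 2 → Fin (w y) → ℝ) : Prop :=
  ∀ x y a b, 0 ≤ P x y a b

/-- The behavior `P` is normalized. -/
def Normalized22 {n : ℕ} {w : Fin n → ℕ}
    (P : Fin 2 → (y : Fin n) → Fin 2 → Fin (w y) → ℝ) : Prop :=
  ∀ x y, (∑ a, ∑ b, P x y a b) = 1

/-- The behavior `P` is no-signalling: A's marginals do not depend on `y` and B's
marginals do not depend on `x`. -/
def NoSignalling22 {n : ℕ} {w : Fin n → ℕ}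
    (P : Fin 2 → (y : Fin n) → Fin 2 → Fin (w y) → ℝ) : Prop :=
  (∀ (x : Fin 2) (a : Fin 2) (y y' : Fin n), (∑ b, P x y a b) = (∑ b, P x y' a b)) ∧
  (∀ (y : Fin n) (b : Fin (w y)) (x x' : Fin 2), (∑ a, P x y a b) = (∑ a, P x' y a b))

/-- `P` is a convex combination of deterministic behaviors, i.e. it is local. -/
def IsLocal22 {n : ℕ} {w : Fin n → ℕ}
    (P : Fin 2 → (y : Fin n) → Fin 2 → Fin (w y) → ℝ) : Prop :=
  ∃ q : (Fin 2 → Fin 2) → ((y : Fin n) → Fin (w y)) → ℝ,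
    (∀ α β, 0 ≤ q α β) ∧
    (∑ α, ∑ β, q α β) = 1 ∧
    (∀ (x : Fin 2) (y : Fin n) (a : Fin 2) (b : Fin (w y)),
      P x y a b = ∑ α, ∑ β,
        q α β * (if α x = a then 1 else 0) * (if β y = b then 1 else 0))

/-- `P_A(a|x)`, A's marginal probability of outcome `a` for measurement `x`,
computed using B's measurement `y` (independent of `y` for no-signalling behaviors). -/
noncomputable def PAm {n : ℕ} {w : Fin n → ℕ}
    (P : Fin 2 → (y : Fin n) → Fin 2 → Fin (w y) → ℝ) (a x : Fin 2) (y : Fin n) : ℝ :=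
  ∑ b, P x y a b

/-- `P_B(G|y) = Σ_{b∈G} P_B(b|y)`, computed using A's measurement `x = 0`
(independent of `x` for no-signalling behaviors). -/
noncomputable def PBm {n : ℕ} {w : Fin n → ℕ}
    (P : Fin 2 → (y : Fin n) → Fin 2 → Fin (w y) → ℝ) (y : Fin n)
    (G : Finset (Fin (w y))) : ℝ :=
  ∑ b ∈ G, ∑ a, P 0 y a b

/-- `P(aG|xy) = Σ_{b∈G} P(ab|xy)`. -/
noncomputable def PaG {n : ℕ} {w : Fin n → ℕ}
    (P : Fin 2 → (y : Fin n) → Fin 2 → Fin (w y) → ℝ) (a x : Fin 2) (y : Fin n)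
    (G : Finset (Fin (w y))) : ℝ :=
  ∑ b ∈ G, P x y a b

/-- `P` satisfies all lifted CHSH inequalities: for every ordered pair of distinct
measurements `y ≠ y'` of B and all nonempty `G ⊆ {1,…,w_y−1}`, `G' ⊆ {1,…,w_{y'}−1}`
(i.e. avoiding the last outcome),
`0 ≤ P_A(1|1) + P_B(G|y) − P(1G|1y) − P(1G|2y) − P(1G′|1y′) + P(1G′|2y′) ≤ 1` and
`0 ≤ P_A(1|2) + P_B(G|y) − P(1G|1y) − P(1G|2y) + P(1G′|1y′) − P(1G′|2y′) ≤ 1`. -/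
def LiftedCHSH {n : ℕ} {w : Fin n → ℕ}
    (P : Fin 2 → (y : Fin n) → Fin 2 → Fin (w y) → ℝ) : Prop :=
  ∀ (y y' : Fin n), y ≠ y' →
  ∀ (G : Finset (Fin (w y))) (G' : Finset (Fin (w y'))),
    G.Nonempty → G'.Nonempty →
    (∀ j ∈ G, (j : ℕ) + 1 < w y) → (∀ j ∈ G', (j : ℕ) + 1 < w y') →
    (0 ≤ PAm P 0 0 y + PBm P y G - PaG P 0 0 y G - PaG P 0 1 y G
          - PaG P 0 0 y' G' + PaG P 0 1 y' G' ∧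
     PAm P 0 0 y + PBm P y G - PaG P 0 0 y G - PaG P 0 1 y G
          - PaG P 0 0 y' G' + PaG P 0 1 y' G' ≤ 1) ∧
    (0 ≤ PAm P 0 1 y + PBm P y G - PaG P 0 0 y G - PaG P 0 1 y G
          + PaG P 0 0 y' G' - PaG P 0 1 y' G' ∧
     PAm P 0 1 y + PBm P y G - PaG P 0 0 y G - PaG P 0 1 y G
          + PaG P 0 0 y' G' - PaG P 0 1 y' G' ≤ 1)

section Aux
open Finset
variable {n : ℕ} {w : Fin n → ℕ}
variable (P : Fin 2 → (y : Fin n) → Fin 2 → Fin (w y) → ℝ)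
variable (q : (Fin 2 → Fin 2) → ((y : Fin n) → Fin (w y)) → ℝ)

lemma rep_PaG
    (hrep : ∀ (x : Fin 2) (y : Fin n) (a : Fin 2) (b : Fin (w y)),
      P x y a b = ∑ α, ∑ β, q α β * (if α x = a then 1 else 0) * (if β y = b then 1 else 0))
    (a x : Fin 2) (y : Fin n) (G : Finset (Fin (w y))) :
    PaG P a x y G = ∑ α, ∑ β, q α β * (if α x = a then 1 else 0)
      * (if β y ∈ G then 1 else 0) := by
  simp only [PaG, hrep]
  rw [Finset.sum_comm]
  refine Finset.sum_congr rfl fun α _ => ?_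
  rw [Finset.sum_comm]
  refine Finset.sum_congr rfl fun β _ => ?_
  rw [← Finset.mul_sum, Finset.sum_ite_eq]

lemma rep_PAm
    (hrep : ∀ (x : Fin 2) (y : Fin n) (a : Fin 2) (b : Fin (w y)),
      P x y a b = ∑ α, ∑ β, q α β * (if α x = a then 1 else 0) * (if β y = b then 1 else 0))
    (a x : Fin 2) (y : Fin n) :
    PAm P a x y = ∑ α, ∑ β, q α β * (if α x = a then 1 else 0) := by
  have h := rep_PaG P q hrep a x y Finset.univ
  simpa [PAm, PaG] using h

lemma rep_PBm
    (hrep : ∀ (x : Fin 2) (y : Fin n) (a : Fin 2) (b : Fin (w y)),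
      P x y a b = ∑ α, ∑ β, q α β * (if α x = a then 1 else 0) * (if β y = b then 1 else 0))
    (y : Fin n) (G : Finset (Fin (w y))) :
    PBm P y G = ∑ α, ∑ β, q α β * (if β y ∈ G then 1 else 0) := by
  have h0 := rep_PaG P q hrep 0 0 y G
  have h1 := rep_PaG P q hrep 1 0 y G
  have hsplit : PBm P y G = PaG P 0 0 y G + PaG P 1 0 y G := by
    simp [PBm, PaG, Fin.sum_univ_two, Finset.sum_add_distrib]
  rw [hsplit, h0, h1, ← Finset.sum_add_distrib]
  refine Finset.sum_congr rfl fun α _ => ?_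
  rw [← Finset.sum_add_distrib]
  refine Finset.sum_congr rfl fun β _ => ?_
  rcases em (α 0 = 0) with h | h
  · have h' : α 0 ≠ 1 := by simp [h]
    simp [h, h']
  · have h' : α 0 = 1 := by omega
    simp [h, h']

lemma combo_bounds {A B : Type*} [Fintype A] [Fintype B] (q : A → B → ℝ)
    (hq : ∀ a b, 0 ≤ q a b) (hq1 : (∑ a, ∑ b, q a b) = 1)
    (c : A → B → ℝ) (hc0 : ∀ a b, 0 ≤ c a b) (hc1 : ∀ a b, c a b ≤ 1) :
    0 ≤ (∑ a, ∑ b, q a b * c a b) ∧ (∑ a, ∑ b, q a b * c a b) ≤ 1 := by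
  constructor
  · exact Finset.sum_nonneg fun a _ => Finset.sum_nonneg fun b _ =>
      mul_nonneg (hq a b) (hc0 a b)
  · calc (∑ a, ∑ b, q a b * c a b) ≤ ∑ a, ∑ b, q a b := by
          refine Finset.sum_le_sum fun a _ => Finset.sum_le_sum fun b _ => ?_
          nlinarith [hq a b, hc1 a b]
    _ = 1 := hq1

end Aux
section Fwd
open Finset
variable {n : ℕ} {w : Fin n → ℕ}

lemma local_implies_CHSH (P : Fin 2 → (y : Fin n) → Fin 2 → Fin (w y) → ℝ)
    (hloc : IsLocal22 P) : Nonneg22 P ∧ LiftedCHSH P := by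
  obtain ⟨q, hq0, hq1, hrep⟩ := hloc
  constructor
  · intro x y a b
    rw [hrep]
    refine Finset.sum_nonneg fun α _ => Finset.sum_nonneg fun β _ => ?_
    have := hq0 α β
    positivity
  · intro y y' hne G G' _ _ _ _
    have hA : PAm P 0 0 y + PBm P y G - PaG P 0 0 y G - PaG P 0 1 y G
          - PaG P 0 0 y' G' + PaG P 0 1 y' G'
        = ∑ α, ∑ β, q α β *
            ((if α 0 = 0 then (1:ℝ) else 0) + (if β y ∈ G then 1 else 0)
             - (if α 0 = 0 then (1:ℝ) else 0) * (if β y ∈ G then 1 else 0)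
             - (if α 1 = 0 then (1:ℝ) else 0) * (if β y ∈ G then 1 else 0)
             - (if α 0 = 0 then (1:ℝ) else 0) * (if β y' ∈ G' then 1 else 0)
             + (if α 1 = 0 then (1:ℝ) else 0) * (if β y' ∈ G' then 1 else 0)) := by
      rw [rep_PAm P q hrep 0 0 y, rep_PBm P q hrep y G, rep_PaG P q hrep 0 0 y G,
        rep_PaG P q hrep 0 1 y G, rep_PaG P q hrep 0 0 y' G', rep_PaG P q hrep 0 1 y' G']
      simp only [← Finset.sum_add_distrib, ← Finset.sum_sub_distrib]
      exact Finset.sum_congr rfl fun α _ => Finset.sum_congr rfl fun β _ => by ring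
    have hB : PAm P 0 1 y + PBm P y G - PaG P 0 0 y G - PaG P 0 1 y G
          + PaG P 0 0 y' G' - PaG P 0 1 y' G'
        = ∑ α, ∑ β, q α β *
            ((if α 1 = 0 then (1:ℝ) else 0) + (if β y ∈ G then 1 else 0)
             - (if α 0 = 0 then (1:ℝ) else 0) * (if β y ∈ G then 1 else 0)
             - (if α 1 = 0 then (1:ℝ) else 0) * (if β y ∈ G then 1 else 0)
             + (if α 0 = 0 then (1:ℝ) else 0) * (if β y' ∈ G' then 1 else 0)
             - (if α 1 = 0 then (1:ℝ) else 0) * (if β y' ∈ G' then 1 else 0)) := by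
      rw [rep_PAm P q hrep 0 1 y, rep_PBm P q hrep y G, rep_PaG P q hrep 0 0 y G,
        rep_PaG P q hrep 0 1 y G, rep_PaG P q hrep 0 0 y' G', rep_PaG P q hrep 0 1 y' G']
      simp only [← Finset.sum_add_distrib, ← Finset.sum_sub_distrib]
      exact Finset.sum_congr rfl fun α _ => Finset.sum_congr rfl fun β _ => by ring
    rw [hA, hB]
    constructor
    · exact combo_bounds q hq0 hq1 _
        (fun α β => by split_ifs <;> norm_num)
        (fun α β => by split_ifs <;> norm_num)
    · exact combo_bounds q hq0 hq1 _
        (fun α β => by split_ifs <;> norm_num)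
        (fun α β => by split_ifs <;> norm_num)

end Fwd
section Bwd
open Finset
variable {n : ℕ} {w : Fin n → ℕ}
variable (P : Fin 2 → (y : Fin n) → Fin 2 → Fin (w y) → ℝ)

-- basic facts
lemma PaG_nonneg (hpos : Nonneg22 P) (a x : Fin 2) (y : Fin n) (G : Finset (Fin (w y))) :
    0 ≤ PaG P a x y G := Finset.sum_nonneg fun b _ => hpos x y a b

lemma PaG_le_PAm (hpos : Nonneg22 P) (a x : Fin 2) (y : Fin n) (G : Finset (Fin (w y))) :
    PaG P a x y G ≤ PAm P a x y :=
  Finset.sum_le_sum_of_subset_of_nonneg (Finset.subset_univ G) fun b _ _ => hpos x y a b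

lemma PaG0_le_PBm (hpos : Nonneg22 P) (y : Fin n) (G : Finset (Fin (w y))) :
    PaG P 0 0 y G ≤ PBm P y G := by
  refine Finset.sum_le_sum fun b _ => ?_
  rw [Fin.sum_univ_two]
  have := hpos 0 y 1 b
  linarith

lemma PaG1_le_PBm (hpos : Nonneg22 P) (hns : NoSignalling22 P) (y : Fin n)
    (G : Finset (Fin (w y))) :
    PaG P 0 1 y G ≤ PBm P y G := by
  refine Finset.sum_le_sum fun b _ => ?_
  rw [← hns.2 y b 1 0, Fin.sum_univ_two]
  have := hpos 1 y 1 b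
  linarith

lemma PaG_compl (a x : Fin 2) (y : Fin n) (G : Finset (Fin (w y))) :
    PaG P a x y Gᶜ = PAm P a x y - PaG P a x y G := by
  have h : PaG P a x y G + PaG P a x y Gᶜ = PAm P a x y := by
    simpa [PaG, PAm] using Finset.sum_add_sum_compl G (fun b => P x y a b)
  linarith

lemma PBm_compl (hnorm : Normalized22 P) (y : Fin n) (G : Finset (Fin (w y))) :
    PBm P y Gᶜ = 1 - PBm P y G := by
  have h : PBm P y G + PBm P y Gᶜ = 1 := by
    have h2 : (∑ b, ∑ a, P 0 y a b) = 1 := by rw [Finset.sum_comm]; exact hnorm 0 y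
    simpa [PBm] using (Finset.sum_add_sum_compl G (fun b => ∑ a, P 0 y a b)).trans h2
  linarith

lemma PaG_univ (a x : Fin 2) (y : Fin n) : PaG P a x y Finset.univ = PAm P a x y := rfl

lemma PBm_univ (hnorm : Normalized22 P) (y : Fin n) : PBm P y Finset.univ = 1 := by
  rw [PBm, Finset.sum_comm]; exact hnorm 0 y

lemma avoid_last_iff (hw : ∀ y, 2 ≤ w y) (y : Fin n) (G : Finset (Fin (w y))) :
    (∀ j ∈ G, (j : ℕ) + 1 < w y) ↔ (⟨w y - 1, by have := hw y; omega⟩ : Fin (w y)) ∉ G := by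
  constructor
  · intro h hmem
    have := h _ hmem
    simp at this
    omega
  · intro h j hj
    have hjlt := j.isLt
    rcases Nat.lt_or_ge ((j : ℕ) + 1) (w y) with h1 | h1
    · exact h1
    · exfalso
      have : j = (⟨w y - 1, by have := hw y; omega⟩ : Fin (w y)) := by
        apply Fin.ext; simp; omega
      exact h (this ▸ hj)

lemma PaG_empty (a x : Fin 2) (y : Fin n) : PaG P a x y ∅ = 0 := by simp [PaG]

lemma PBm_empty (y : Fin n) : PBm P y ∅ = 0 := by simp [PBm]

/-- The generalized lower CHSH-(A) inequality, for arbitrary `G`, `G'`. -/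
lemma genA (hw : ∀ y, 2 ≤ w y) (hpos : Nonneg22 P) (hnorm : Normalized22 P)
    (hns : NoSignalling22 P) (hchsh : LiftedCHSH P)
    (y y' : Fin n) (hne : y ≠ y') (G : Finset (Fin (w y))) (G' : Finset (Fin (w y'))) :
    0 ≤ PAm P 0 0 y + PBm P y G - PaG P 0 0 y G - PaG P 0 1 y G
        - PaG P 0 0 y' G' + PaG P 0 1 y' G' := by
  have hA0 : PAm P 0 0 y = PAm P 0 0 y' := hns.1 0 0 y y'
  have hA1 : PAm P 0 1 y = PAm P 0 1 y' := hns.1 1 0 y y'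
  by_cases hGe : G = ∅
  · subst hGe
    have h1 := PaG_le_PAm P hpos 0 0 y' G'
    have h2 := PaG_nonneg P hpos 0 1 y' G'
    rw [PaG_empty, PaG_empty, PBm_empty]
    linarith
  by_cases hGu : G = Finset.univ
  · subst hGu
    rw [PaG_univ, PaG_univ, PBm_univ P hnorm]
    have h1 := PaG0_le_PBm P hpos y' G'
    have h2 : PAm P 0 1 y' - PaG P 0 1 y' G' ≤ 1 - PBm P y' G' := by
      have := PaG1_le_PBm P hpos hns y' G'ᶜ
      rw [PaG_compl, PBm_compl P hnorm] at this
      linarith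
    linarith
  by_cases hG'e : G' = ∅
  · subst hG'e
    have h1 := PaG1_le_PBm P hpos hns y G
    have h2 := PaG_le_PAm P hpos 0 0 y G
    rw [PaG_empty, PaG_empty]
    linarith
  by_cases hG'u : G' = Finset.univ
  · subst hG'u
    rw [PaG_univ, PaG_univ]
    have h1 := PaG0_le_PBm P hpos y G
    have h2 := PaG_le_PAm P hpos 0 1 y G
    linarith
  -- proper nonempty case
  have hGne : G.Nonempty := Finset.nonempty_iff_ne_empty.mpr hGe
  have hG'ne : G'.Nonempty := Finset.nonempty_iff_ne_empty.mpr hG'e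
  have hGcne : Gᶜ.Nonempty := by
    simpa [Finset.nonempty_iff_ne_empty, Finset.compl_eq_empty_iff] using hGu
  have hG'cne : G'ᶜ.Nonempty := by
    simpa [Finset.nonempty_iff_ne_empty, Finset.compl_eq_empty_iff] using hG'u
  set lG : Fin (w y) := ⟨w y - 1, by have := hw y; omega⟩ with hlG
  set lG' : Fin (w y') := ⟨w y' - 1, by have := hw y'; omega⟩ with hlG'
  have hcGc : PaG P 0 0 y Gᶜ = PAm P 0 0 y - PaG P 0 0 y G := PaG_compl P 0 0 y G
  have hcGc1 : PaG P 0 1 y Gᶜ = PAm P 0 1 y - PaG P 0 1 y G := PaG_compl P 0 1 y G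
  have hcG'c : PaG P 0 0 y' G'ᶜ = PAm P 0 0 y' - PaG P 0 0 y' G' := PaG_compl P 0 0 y' G'
  have hcG'c1 : PaG P 0 1 y' G'ᶜ = PAm P 0 1 y' - PaG P 0 1 y' G' := PaG_compl P 0 1 y' G'
  have hcB : PBm P y Gᶜ = 1 - PBm P y G := PBm_compl P hnorm y G
  by_cases hg : lG ∈ G <;> by_cases hg' : lG' ∈ G'
  · have h := ((hchsh y y' hne Gᶜ G'ᶜ hGcne hG'cne
      ((avoid_last_iff hw y Gᶜ).mpr (by simpa using hg))
      ((avoid_last_iff hw y' G'ᶜ).mpr (by simpa using hg'))).1).2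
    rw [hcGc, hcGc1, hcG'c, hcG'c1, hcB] at h
    linarith
  · have h := ((hchsh y y' hne Gᶜ G' hGcne hG'ne
      ((avoid_last_iff hw y Gᶜ).mpr (by simpa using hg))
      ((avoid_last_iff hw y' G').mpr hg')).2).2
    rw [hcGc, hcGc1, hcB] at h
    linarith
  · have h := ((hchsh y y' hne G G'ᶜ hGne hG'cne
      ((avoid_last_iff hw y G).mpr hg)
      ((avoid_last_iff hw y' G'ᶜ).mpr (by simpa using hg'))).2).1
    rw [hcG'c, hcG'c1] at h
    linarith
  · exact ((hchsh y y' hne G G' hGne hG'ne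
      ((avoid_last_iff hw y G).mpr hg)
      ((avoid_last_iff hw y' G').mpr hg')).1).1

end Bwd
section Bwd2
open Finset
variable {n : ℕ} {w : Fin n → ℕ}

/-- `d_y(b) = P(1b|1y)+P(1b|2y)-P_B(b|y)`. -/
noncomputable def dd (P : Fin 2 → (y : Fin n) → Fin 2 → Fin (w y) → ℝ) (y : Fin n)
    (b : Fin (w y)) : ℝ := P 0 y 0 b + P 1 y 0 b - ∑ a, P 0 y a b

noncomputable def mm (P : Fin 2 → (y : Fin n) → Fin 2 → Fin (w y) → ℝ) (y : Fin n)
    (b : Fin (w y)) : ℝ := max 0 (dd P y b)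

noncomputable def MM (P : Fin 2 → (y : Fin n) → Fin 2 → Fin (w y) → ℝ) (y : Fin n)
    (b : Fin (w y)) : ℝ := min (P 0 y 0 b) (P 1 y 0 b)

noncomputable def LL (P : Fin 2 → (y : Fin n) → Fin 2 → Fin (w y) → ℝ) (y : Fin n) : ℝ :=
  ∑ b, mm P y b

noncomputable def UU (P : Fin 2 → (y : Fin n) → Fin 2 → Fin (w y) → ℝ) (y : Fin n) : ℝ :=
  ∑ b, MM P y b

variable (P : Fin 2 → (y : Fin n) → Fin 2 → Fin (w y) → ℝ)

lemma mm_le_MM (hpos : Nonneg22 P) (hns : NoSignalling22 P) (y : Fin n) (b : Fin (w y)) :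
    mm P y b ≤ MM P y b := by
  have h2 := hns.2 y b 0 1
  rw [Fin.sum_univ_two, Fin.sum_univ_two] at h2
  have h3 := hpos 1 y 1 b
  have h4 := hpos 0 y 1 b
  have h5 := hpos 0 y 0 b
  have h6 := hpos 1 y 0 b
  rw [mm, MM, dd, Fin.sum_univ_two]
  apply max_le
  · exact le_min h5 h6
  · exact le_min (by linarith) (by linarith)

lemma LL_le_UU (hw : ∀ y, 2 ≤ w y) (hpos : Nonneg22 P) (hnorm : Normalized22 P)
    (hns : NoSignalling22 P) (hchsh : LiftedCHSH P) (y y' : Fin n) :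
    LL P y ≤ UU P y' := by
  rcases eq_or_ne y y' with rfl | hne
  · exact Finset.sum_le_sum fun b _ => mm_le_MM P hpos hns y b
  · set G : Finset (Fin (w y)) := Finset.univ.filter (fun b => 0 < dd P y b) with hG
    set G' : Finset (Fin (w y')) := Finset.univ.filter
      (fun b => P 1 y' 0 b < P 0 y' 0 b) with hG'
    have hL : LL P y = PaG P 0 0 y G + PaG P 0 1 y G - PBm P y G := by
      have h1 : LL P y = ∑ b ∈ G, dd P y b := by
        rw [hG, Finset.sum_filter]
        refine Finset.sum_congr rfl fun b _ => ?_
        rcases lt_or_ge 0 (dd P y b) with h | h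
        · rw [mm, max_eq_right h.le, if_pos h]
        · rw [mm, max_eq_left h, if_neg (not_lt.mpr h)]
      rw [h1]
      simp only [dd, PaG, PBm, Finset.sum_add_distrib, Finset.sum_sub_distrib]
    have hU : UU P y' = PAm P 0 0 y' - PaG P 0 0 y' G' + PaG P 0 1 y' G' := by
      have h1 : UU P y' = ∑ b, (P 0 y' 0 b
          + (if P 1 y' 0 b < P 0 y' 0 b then P 1 y' 0 b - P 0 y' 0 b else 0)) := by
        refine Finset.sum_congr rfl fun b _ => ?_
        rw [MM]
        rcases lt_or_ge (P 1 y' 0 b) (P 0 y' 0 b) with h | h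
        · rw [min_eq_right h.le, if_pos h]; ring
        · rw [min_eq_left h, if_neg (not_lt.mpr h)]; ring
      rw [h1, Finset.sum_add_distrib, ← Finset.sum_filter, ← hG', Finset.sum_sub_distrib]
      simp only [PAm, PaG]
      ring
    have hgen := genA P hw hpos hnorm hns hchsh y y' hne G G'
    have hA0 : PAm P 0 0 y = PAm P 0 0 y' := hns.1 0 0 y y'
    linarith

end Bwd2
section Bwd3
open Finset
variable {n : ℕ} {w : Fin n → ℕ}

noncomputable def tt (P : Fin 2 → (y : Fin n) → Fin 2 → Fin (w y) → ℝ) (hn : 0 < n) : ℝ :=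
  Finset.univ.sup' ⟨⟨0, hn⟩, Finset.mem_univ _⟩ (LL P)

variable (P : Fin 2 → (y : Fin n) → Fin 2 → Fin (w y) → ℝ) (hn : 0 < n)

lemma LL_le_tt (y : Fin n) : LL P y ≤ tt P hn :=
  Finset.le_sup' (LL P) (Finset.mem_univ y)

variable (hw : ∀ y, 2 ≤ w y) (hpos : Nonneg22 P) (hnorm : Normalized22 P)
  (hns : NoSignalling22 P) (hchsh : LiftedCHSH P)

include hw hpos hnorm hns hchsh

lemma tt_le_UU (y : Fin n) : tt P hn ≤ UU P y :=
  Finset.sup'_le _ _ fun y' _ => LL_le_UU P hw hpos hnorm hns hchsh y' y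

omit hw hpos hnorm hns hchsh in
lemma LL_nonneg (y : Fin n) : 0 ≤ LL P y :=
  Finset.sum_nonneg fun b _ => le_max_left 0 _

omit hw hpos hnorm hns hchsh in
lemma tt_nonneg : 0 ≤ tt P hn :=
  le_trans (LL_nonneg P ⟨0, hn⟩) (LL_le_tt P hn ⟨0, hn⟩)

omit hw hpos hnorm hns hchsh in
lemma UU_le_PA0 (y : Fin n) : UU P y ≤ PAm P 0 0 y :=
  Finset.sum_le_sum fun b _ => min_le_left _ _

omit hw hpos hnorm hns hchsh in
lemma UU_le_PA1 (y : Fin n) : UU P y ≤ PAm P 0 1 y :=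
  Finset.sum_le_sum fun b _ => min_le_right _ _

omit hw hpos hns hchsh in
lemma PA_le_LL (y : Fin n) : PAm P 0 0 y + PAm P 0 1 y - 1 ≤ LL P y := by
  have h1 : (∑ b, dd P y b) = PAm P 0 0 y + PAm P 0 1 y - 1 := by
    have h2 : (∑ b, ∑ a, P 0 y a b) = 1 := by rw [Finset.sum_comm]; exact hnorm 0 y
    simp only [dd, Finset.sum_add_distrib, Finset.sum_sub_distrib, h2, PAm]
  calc PAm P 0 0 y + PAm P 0 1 y - 1 = ∑ b, dd P y b := h1.symm
  _ ≤ LL P y := Finset.sum_le_sum fun b _ => le_max_right 0 _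

/-- The interpolated per-outcome weight. -/
noncomputable def ss (y : Fin n) (b : Fin (w y)) : ℝ :=
  if LL P y = UU P y then mm P y b
  else mm P y b + ((tt P hn - LL P y) / (UU P y - LL P y)) * (MM P y b - mm P y b)

lemma ss_sum (y : Fin n) : (∑ b, ss P hn y b) = tt P hn := by
  by_cases h : LL P y = UU P y
  · have ht : tt P hn = LL P y :=
      le_antisymm (h ▸ tt_le_UU P hn hw hpos hnorm hns hchsh y) (LL_le_tt P hn y)
    simp only [ss, if_pos h, ht]
    rfl
  · simp only [ss, if_neg h]
    rw [Finset.sum_add_distrib, ← Finset.mul_sum, Finset.sum_sub_distrib]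
    rw [show (∑ b, mm P y b) = LL P y from rfl, show (∑ b, MM P y b) = UU P y from rfl]
    have hne' : UU P y - LL P y ≠ 0 := by
      have := LL_le_UU P hw hpos hnorm hns hchsh y y
      intro hc; apply h; linarith
    field_simp
    ring

lemma mm_le_ss (y : Fin n) (b : Fin (w y)) : mm P y b ≤ ss P hn y b := by
  by_cases h : LL P y = UU P y
  · simp [ss, h]
  · simp only [ss, if_neg h]
    have hlt : LL P y < UU P y :=
      lt_of_le_of_ne (LL_le_UU P hw hpos hnorm hns hchsh y y) h
    have hc : 0 ≤ (tt P hn - LL P y) / (UU P y - LL P y) :=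
      div_nonneg (by have := LL_le_tt P hn y; linarith) (by linarith)
    have hMm : 0 ≤ MM P y b - mm P y b := by
      have := mm_le_MM P hpos hns y b; linarith
    nlinarith
  
lemma ss_le_MM (y : Fin n) (b : Fin (w y)) : ss P hn y b ≤ MM P y b := by
  by_cases h : LL P y = UU P y
  · simp only [ss, if_pos h]; exact mm_le_MM P hpos hns y b
  · simp only [ss, if_neg h]
    have hlt : LL P y < UU P y :=
      lt_of_le_of_ne (LL_le_UU P hw hpos hnorm hns hchsh y y) h
    have hc : (tt P hn - LL P y) / (UU P y - LL P y) ≤ 1 := by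
      rw [div_le_one (by linarith)]
      have := tt_le_UU P hn hw hpos hnorm hns hchsh y
      linarith
    have hc0 : 0 ≤ (tt P hn - LL P y) / (UU P y - LL P y) :=
      div_nonneg (by have := LL_le_tt P hn y; linarith) (by linarith)
    have hMm : 0 ≤ MM P y b - mm P y b := by
      have := mm_le_MM P hpos hns y b; linarith
    nlinarith

lemma ss_nonneg (y : Fin n) (b : Fin (w y)) : 0 ≤ ss P hn y b :=
  le_trans (le_max_left 0 _) (mm_le_ss P hn hw hpos hnorm hns hchsh y b)

lemma dd_le_ss (y : Fin n) (b : Fin (w y)) : dd P y b ≤ ss P hn y b :=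
  le_trans (le_max_right 0 _) (mm_le_ss P hn hw hpos hnorm hns hchsh y b)

end Bwd3
section Bwd4
open Finset
variable {n : ℕ} {w : Fin n → ℕ}

/-- The hidden-variable distribution over A's deterministic strategies. -/
noncomputable def qAf (P : Fin 2 → (y : Fin n) → Fin 2 → Fin (w y) → ℝ) (hn : 0 < n)
    (a0 a1 : Fin 2) : ℝ :=
  if a0 = 0 then (if a1 = 0 then tt P hn else PAm P 0 0 ⟨0, hn⟩ - tt P hn)
  else (if a1 = 0 then PAm P 0 1 ⟨0, hn⟩ - tt P hn
        else 1 - PAm P 0 0 ⟨0, hn⟩ - PAm P 0 1 ⟨0, hn⟩ + tt P hn)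

/-- The joint distribution of `(A0, A1, B_y)`. -/
noncomputable def RR (P : Fin 2 → (y : Fin n) → Fin 2 → Fin (w y) → ℝ) (hn : 0 < n)
    (y : Fin n) (a0 a1 : Fin 2) (b : Fin (w y)) : ℝ :=
  if a0 = 0 then (if a1 = 0 then ss P hn y b else P 0 y 0 b - ss P hn y b)
  else (if a1 = 0 then P 1 y 0 b - ss P hn y b
        else P 0 y 1 b - P 1 y 0 b + ss P hn y b)

variable (P : Fin 2 → (y : Fin n) → Fin 2 → Fin (w y) → ℝ) (hn : 0 < n)
variable (hw : ∀ y, 2 ≤ w y) (hpos : Nonneg22 P) (hnorm : Normalized22 P)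
  (hns : NoSignalling22 P) (hchsh : LiftedCHSH P)

include hw hpos hnorm hns hchsh

lemma RR_nonneg (y : Fin n) (a0 a1 : Fin 2) (b : Fin (w y)) : 0 ≤ RR P hn y a0 a1 b := by
  have h1 := ss_nonneg P hn hw hpos hnorm hns hchsh y b
  have h2 := ss_le_MM P hn hw hpos hnorm hns hchsh y b
  have h3 := dd_le_ss P hn hw hpos hnorm hns hchsh y b
  rw [MM] at h2
  rw [dd, Fin.sum_univ_two] at h3
  have h4 : min (P 0 y 0 b) (P 1 y 0 b) ≤ P 0 y 0 b := min_le_left _ _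
  have h5 : min (P 0 y 0 b) (P 1 y 0 b) ≤ P 1 y 0 b := min_le_right _ _
  fin_cases a0 <;> fin_cases a1 <;> simp only [RR] <;> norm_num <;> linarith

lemma RR_row (y : Fin n) (a0 : Fin 2) (b : Fin (w y)) :
    (∑ a1, RR P hn y a0 a1 b) = P 0 y a0 b := by
  fin_cases a0 <;> simp [RR, Fin.sum_univ_two] <;> ring

lemma RR_col (y : Fin n) (a1 : Fin 2) (b : Fin (w y)) :
    (∑ a0, RR P hn y a0 a1 b) = P 1 y a1 b := by
  have h2 := hns.2 y b 0 1
  rw [Fin.sum_univ_two, Fin.sum_univ_two] at h2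
  fin_cases a1 <;> simp [RR, Fin.sum_univ_two] <;> linarith

lemma RR_sum (y : Fin n) (a0 a1 : Fin 2) :
    (∑ b, RR P hn y a0 a1 b) = qAf P hn a0 a1 := by
  have hss := ss_sum P hn hw hpos hnorm hns hchsh y
  have hA0 : (∑ b, P 0 y 0 b) = PAm P 0 0 ⟨0, hn⟩ := hns.1 0 0 y ⟨0, hn⟩
  have hA1 : (∑ b, P 1 y 0 b) = PAm P 0 1 ⟨0, hn⟩ := hns.1 1 0 y ⟨0, hn⟩
  have hA2 : (∑ b, P 0 y 1 b) = 1 - PAm P 0 0 ⟨0, hn⟩ := by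
    have h := hnorm 0 y
    rw [Fin.sum_univ_two] at h
    linarith
  fin_cases a0 <;> fin_cases a1 <;>
    simp only [RR, qAf] <;> norm_num <;>
    simp only [Finset.sum_add_distrib, Finset.sum_sub_distrib, hss, hA0, hA1, hA2] <;>
    ring

omit hw hpos hnorm hns hchsh in
lemma qAf_sum : (∑ a0, ∑ a1, qAf P hn a0 a1) = 1 := by
  simp [Fin.sum_univ_two, qAf]

lemma qAf_nonneg (a0 a1 : Fin 2) : 0 ≤ qAf P hn a0 a1 := by
  have h1 := tt_nonneg P hn
  have h2 := tt_le_UU P hn hw hpos hnorm hns hchsh ⟨0, hn⟩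
  have h3 := UU_le_PA0 P ⟨0, hn⟩
  have h4 := UU_le_PA1 P ⟨0, hn⟩
  have h5 := PA_le_LL P hnorm ⟨0, hn⟩
  have h6 := LL_le_tt P hn ⟨0, hn⟩
  fin_cases a0 <;> fin_cases a1 <;> simp only [qAf] <;> norm_num <;> linarith

/-- The conditional distribution of `B_y` given A's strategy. -/
noncomputable def pp (P : Fin 2 → (y : Fin n) → Fin 2 → Fin (w y) → ℝ) (hn : 0 < n)
    (hw : ∀ y, 2 ≤ w y) (y : Fin n) (a0 a1 : Fin 2) (b : Fin (w y)) : ℝ :=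
  if qAf P hn a0 a1 = 0 then
    (if b = (⟨0, lt_of_lt_of_le two_pos (hw y)⟩ : Fin (w y)) then 1 else 0)
  else RR P hn y a0 a1 b / qAf P hn a0 a1

lemma pp_nonneg (y : Fin n) (a0 a1 : Fin 2) (b : Fin (w y)) : 0 ≤ pp P hn hw y a0 a1 b := by
  rw [pp]
  split_ifs with h1 h2
  · norm_num
  · norm_num
  · exact div_nonneg (RR_nonneg P hn hw hpos hnorm hns hchsh y a0 a1 b)
      (qAf_nonneg P hn hw hpos hnorm hns hchsh a0 a1)

lemma pp_sum (y : Fin n) (a0 a1 : Fin 2) : (∑ b, pp P hn hw y a0 a1 b) = 1 := by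
  by_cases h : qAf P hn a0 a1 = 0
  · simp only [pp, if_pos h]
    rw [Finset.sum_ite_eq' Finset.univ _ (fun _ => (1:ℝ))]
    simp
  · simp only [pp, if_neg h]
    rw [← Finset.sum_div, RR_sum P hn hw hpos hnorm hns hchsh y a0 a1, div_self h]

lemma qAf_mul_pp (y : Fin n) (a0 a1 : Fin 2) (b : Fin (w y)) :
    qAf P hn a0 a1 * pp P hn hw y a0 a1 b = RR P hn y a0 a1 b := by
  by_cases h : qAf P hn a0 a1 = 0
  · rw [pp, if_pos h, h, zero_mul]
    have hsum : (∑ b, RR P hn y a0 a1 b) = 0 := by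
      rw [RR_sum P hn hw hpos hnorm hns hchsh y a0 a1, h]
    exact ((Finset.sum_eq_zero_iff_of_nonneg
      (fun b _ => RR_nonneg P hn hw hpos hnorm hns hchsh y a0 a1 b)).mp hsum b
      (Finset.mem_univ b)).symm
  · rw [pp, if_neg h, mul_div_cancel₀ _ h]

end Bwd4
section Bwd5
open Finset
variable {n : ℕ} {w : Fin n → ℕ}

lemma sum_pi_fin_two (f : Fin 2 → Fin 2 → ℝ) :
    (∑ α : Fin 2 → Fin 2, f (α 0) (α 1)) = ∑ a0, ∑ a1, f a0 a1 := by
  calc (∑ α : Fin 2 → Fin 2, f (α 0) (α 1))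
      = ∑ p : Fin 2 × Fin 2, f p.1 p.2 :=
        Fintype.sum_equiv (piFinTwoEquiv fun _ => Fin 2) _ _ fun α => rfl
    _ = ∑ a0, ∑ a1, f a0 a1 := Fintype.sum_prod_type _

lemma sum_prod_pi (g : (y : Fin n) → Fin (w y) → ℝ) :
    (∑ β : (y : Fin n) → Fin (w y), ∏ y, g y (β y)) = ∏ y, ∑ b, g y b := by
  rw [Finset.prod_univ_sum, Fintype.piFinset_univ]

lemma sum_pi_indicator (y : Fin n) (b : Fin (w y)) (f : (y' : Fin n) → Fin (w y') → ℝ)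
    (hf : ∀ y', (∑ c, f y' c) = 1) :
    (∑ β : (y' : Fin n) → Fin (w y'),
      (∏ y', f y' (β y')) * (if β y = b then 1 else 0)) = f y b := by
  classical
  set g : (y' : Fin n) → Fin (w y') → ℝ :=
    Function.update (fun y' => f y') y (fun c => if c = b then f y c else 0) with hg
  have hgy : g y = fun c => if c = b then f y c else 0 := Function.update_self y _ _
  have hgy' : ∀ y', y' ≠ y → g y' = f y' := fun y' hy' => Function.update_of_ne hy' _ _
  have claim : ∀ β : (y' : Fin n) → Fin (w y'),
      (∏ y', g y' (β y')) = (∏ y', f y' (β y')) * (if β y = b then 1 else 0) := by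
    intro β
    by_cases hb : β y = b
    · rw [if_pos hb, mul_one]
      refine Finset.prod_congr rfl fun y' _ => ?_
      by_cases hy' : y' = y
      · subst hy'; rw [hgy]; simp [hb]
      · rw [hgy' y' hy']
    · rw [if_neg hb, mul_zero]
      refine Finset.prod_eq_zero (Finset.mem_univ y) ?_
      rw [hgy]; simp [hb]
  calc (∑ β : (y' : Fin n) → Fin (w y'),
          (∏ y', f y' (β y')) * (if β y = b then 1 else 0))
      = ∑ β : (y' : Fin n) → Fin (w y'), ∏ y', g y' (β y') :=
        Finset.sum_congr rfl fun β _ => (claim β).symm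
    _ = ∏ y', ∑ c, g y' c := sum_prod_pi g
    _ = (∑ c, g y c) * ∏ y' ∈ Finset.univ.erase y, ∑ c, g y' c :=
        (Finset.mul_prod_erase Finset.univ _ (Finset.mem_univ y)).symm
    _ = f y b := by
        rw [Finset.prod_eq_one fun y' hy' => by
          rw [hgy' y' (Finset.ne_of_mem_erase hy')]; exact hf y', mul_one]
        rw [hgy, Finset.sum_ite_eq' Finset.univ b (f y), if_pos (Finset.mem_univ b)]

end Bwd5
section Bwd6
open Finset
variable {n : ℕ} {w : Fin n → ℕ}

/-- The local hidden-variable model. -/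
noncomputable def QQ (P : Fin 2 → (y : Fin n) → Fin 2 → Fin (w y) → ℝ) (hn : 0 < n)
    (hw : ∀ y, 2 ≤ w y) (α : Fin 2 → Fin 2) (β : (y : Fin n) → Fin (w y)) : ℝ :=
  qAf P hn (α 0) (α 1) * ∏ y, pp P hn hw y (α 0) (α 1) (β y)

variable (P : Fin 2 → (y : Fin n) → Fin 2 → Fin (w y) → ℝ) (hn : 0 < n)
variable (hw : ∀ y, 2 ≤ w y) (hpos : Nonneg22 P) (hnorm : Normalized22 P)
  (hns : NoSignalling22 P) (hchsh : LiftedCHSH P)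
include hn hw hpos hnorm hns hchsh

lemma QQ_nonneg (α : Fin 2 → Fin 2) (β : (y : Fin n) → Fin (w y)) :
    0 ≤ QQ P hn hw α β :=
  mul_nonneg (qAf_nonneg P hn hw hpos hnorm hns hchsh (α 0) (α 1))
    (Finset.prod_nonneg fun y _ =>
      pp_nonneg P hn hw hpos hnorm hns hchsh y (α 0) (α 1) (β y))

lemma QQ_total : (∑ α : Fin 2 → Fin 2, ∑ β : (y : Fin n) → Fin (w y),
    QQ P hn hw α β) = 1 := by
  have h1 : ∀ (a0 a1 : Fin 2),
      (∑ β : (y : Fin n) → Fin (w y), ∏ y, pp P hn hw y a0 a1 (β y)) = 1 := by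
    intro a0 a1
    rw [sum_prod_pi]
    exact Finset.prod_eq_one fun y _ => pp_sum P hn hw hpos hnorm hns hchsh y a0 a1
  have h2 : ∀ α : Fin 2 → Fin 2, (∑ β : (y : Fin n) → Fin (w y), QQ P hn hw α β)
      = qAf P hn (α 0) (α 1) := by
    intro α
    simp only [QQ]
    rw [← Finset.mul_sum, h1, mul_one]
  rw [Finset.sum_congr rfl fun α _ => h2 α, sum_pi_fin_two (qAf P hn), qAf_sum P hn]

lemma QQ_rep (x : Fin 2) (y : Fin n) (a : Fin 2) (b : Fin (w y)) :
    P x y a b = ∑ α : Fin 2 → Fin 2, ∑ β : (y : Fin n) → Fin (w y),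
      QQ P hn hw α β * (if α x = a then 1 else 0) * (if β y = b then 1 else 0) := by
  have hbeta : ∀ (a0 a1 : Fin 2),
      (∑ β : (y' : Fin n) → Fin (w y'),
        (∏ y', pp P hn hw y' a0 a1 (β y')) * (if β y = b then 1 else 0))
      = pp P hn hw y a0 a1 b := fun a0 a1 =>
    sum_pi_indicator y b (fun y' => pp P hn hw y' a0 a1)
      (fun y' => pp_sum P hn hw hpos hnorm hns hchsh y' a0 a1)
  have step1 : (∑ α : Fin 2 → Fin 2, ∑ β : (y' : Fin n) → Fin (w y'),
        QQ P hn hw α β * (if α x = a then 1 else 0) * (if β y = b then 1 else 0))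
      = ∑ α : Fin 2 → Fin 2, qAf P hn (α 0) (α 1) * (if α x = a then 1 else 0)
          * pp P hn hw y (α 0) (α 1) b := by
    refine Finset.sum_congr rfl fun α _ => ?_
    have e1 : ∀ β : (y' : Fin n) → Fin (w y'),
        QQ P hn hw α β * (if α x = a then 1 else 0) * (if β y = b then 1 else 0)
        = (qAf P hn (α 0) (α 1) * (if α x = a then 1 else 0))
            * ((∏ y', pp P hn hw y' (α 0) (α 1) (β y')) * (if β y = b then 1 else 0)) := by
      intro β; simp only [QQ]; ring
    rw [Finset.sum_congr rfl fun β _ => e1 β, ← Finset.mul_sum, hbeta, mul_assoc]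
  rw [step1]
  by_cases hx : x = 0
  · subst hx
    have h2 := sum_pi_fin_two (fun a0 a1 => qAf P hn a0 a1
      * (if a0 = a then (1:ℝ) else 0) * pp P hn hw y a0 a1 b)
    rw [h2]
    have h3 : ∀ a0 a1 : Fin 2, qAf P hn a0 a1 * (if a0 = a then (1:ℝ) else 0)
        * pp P hn hw y a0 a1 b = (if a0 = a then 1 else 0) * RR P hn y a0 a1 b := by
      intro a0 a1
      rw [← qAf_mul_pp P hn hw hpos hnorm hns hchsh y a0 a1 b]; ring
    simp only [h3]
    have h4 : ∀ a0 : Fin 2, (∑ a1, (if a0 = a then (1:ℝ) else 0) * RR P hn y a0 a1 b)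
        = (if a0 = a then 1 else 0) * P 0 y a0 b := by
      intro a0
      rw [← Finset.mul_sum, RR_row P hn hw hpos hnorm hns hchsh y a0 b]
    simp only [h4]
    simp [ite_mul, Finset.sum_ite_eq']
  · have hx1 : x = 1 := by omega
    subst hx1
    have h2 := sum_pi_fin_two (fun a0 a1 => qAf P hn a0 a1
      * (if a1 = a then (1:ℝ) else 0) * pp P hn hw y a0 a1 b)
    rw [h2]
    have h3 : ∀ a0 a1 : Fin 2, qAf P hn a0 a1 * (if a1 = a then (1:ℝ) else 0)
        * pp P hn hw y a0 a1 b = (if a1 = a then 1 else 0) * RR P hn y a0 a1 b := by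
      intro a0 a1
      rw [← qAf_mul_pp P hn hw hpos hnorm hns hchsh y a0 a1 b]; ring
    simp only [h3]
    have h4 : ∀ a0 : Fin 2, (∑ a1, (if a1 = a then (1:ℝ) else 0) * RR P hn y a0 a1 b)
        = RR P hn y a0 a b := by
      intro a0
      simp [ite_mul, Finset.sum_ite_eq']
    simp only [h4]
    exact (RR_col P hn hw hpos hnorm hns hchsh y a b).symm

lemma CHSH_implies_local : IsLocal22 P :=
  ⟨QQ P hn hw, QQ_nonneg P hn hw hpos hnorm hns hchsh,
    QQ_total P hn hw hpos hnorm hns hchsh,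
    QQ_rep P hn hw hpos hnorm hns hchsh⟩

end Bwd6
/-- Theorem 1 of the paper, reformulated: a normalized, no-signalling
behavior in the scenario [(2 2),(w_1…w_n)] is local iff it is nonnegative and satisfies
all lifted CHSH inequalities. -/
theorem local_iff_CHSH
    (n : ℕ) (hn : 2 ≤ n) (w : Fin n → ℕ) (hw : ∀ y, 2 ≤ w y)
    (P : Fin 2 → (y : Fin n) → Fin 2 → Fin (w y) → ℝ)
    (hnorm : Normalized22 P) (hns : NoSignalling22 P) :
    IsLocal22 P ↔ (Nonneg22 P ∧ LiftedCHSH P) := by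
  constructor
  · exact local_implies_CHSH P
  · rintro ⟨hpos, hchsh⟩
    exact CHSH_implies_local P (by omega) hw hpos hnorm hns hchsh
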